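/- arXiv:1601.02766 — 4 statements merged into one kernel-verified Lean document; each statement's English description precedes it below -/
import Mathlib

section
/- Let G be a connected nonbipartite finite simple graph and let 2k − 1 be the maximum length of an odd cycle of G. Then dstab(I(G)) ≤ υ(G) − ε₀(G) − k + 1. -/
open MvPolynomial

/-- The maximal homogeneous ideal `(x_v : v ∈ V)` of the polynomial ring `K[x_v : v ∈ V]`. -/
noncomputable def maxIdeal (K V : Type*) [Field K] : Ideal (MvPolynomial V K) :=
  Ideal.span (Set.range MvPolynomial.X)

/-- `depthQ K J` is the depth of `R/J` with respect to the maximal homogeneous ideal: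
the supremum of lengths of `R/J`-regular sequences with entries in the maximal
homogeneous ideal. -/
noncomputable def depthQ (K : Type*) {V : Type*} [Field K] (J : Ideal (MvPolynomial V K)) : ℕ :=
  sSup {n : ℕ | ∃ rs : List (MvPolynomial V K), rs.length = n ∧
    (∀ x ∈ rs, x ∈ maxIdeal K V) ∧
    RingTheory.Sequence.IsRegular (MvPolynomial V K ⧸ J) rs}

/-- The index of depth stability of an ideal `J`:
the least `n₀ ≥ 1` such that `depth R/J^n = depth R/J^{n₀}` for all `n ≥ n₀`. -/
noncomputable def dstab (K : Type*) {V : Type*} [Field K] (J : Ideal (MvPolynomial V K)) : ℕ :=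
  sInf {n₀ : ℕ | 1 ≤ n₀ ∧ ∀ n : ℕ, n₀ ≤ n → depthQ K (J ^ n) = depthQ K (J ^ n₀)}

/-- The edge ideal `I(G) = (x_i x_j : {i,j} ∈ E(G))`. -/
noncomputable def edgeIdeal (K : Type*) [Field K] {V : Type*} (G : SimpleGraph V) :
    Ideal (MvPolynomial V K) :=
  Ideal.span {p | ∃ i j, G.Adj i j ∧ p = MvPolynomial.X i * MvPolynomial.X j}

/-- A graph is bipartite if its vertex set can be partitioned into `X` and `Y`
so that every edge joins a vertex of `X` to a vertex of `Y`. -/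
def IsBipartite {V : Type*} (G : SimpleGraph V) : Prop :=
  ∃ X Y : Set V, Disjoint X Y ∧ X ∪ Y = Set.univ ∧
    ∀ ⦃i j⦄, G.Adj i j → (i ∈ X ∧ j ∈ Y) ∨ (i ∈ Y ∧ j ∈ X)

/-- A leaf is a vertex of degree one. -/
def IsLeaf {V : Type*} (G : SimpleGraph V) (v : V) : Prop := (G.neighborSet v).ncard = 1

/-- The set of leaf edges: edges incident with a leaf. -/
def leafEdgeSet {V : Type*} (G : SimpleGraph V) : Set (Sym2 V) :=
  {e ∈ G.edgeSet | ∃ v, v ∈ e ∧ IsLeaf G v}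

/-- `ε₀(G)`: the number of leaf edges. -/
noncomputable def eps0 {V : Type*} (G : SimpleGraph V) : ℕ := (leafEdgeSet G).ncard

/-- `ε(G)`: the number of edges. -/
noncomputable def eps {V : Type*} (G : SimpleGraph V) : ℕ := G.edgeSet.ncard

/-- `G` contains a cycle. -/
def HasCycle {V : Type*} (G : SimpleGraph V) : Prop :=
  ∃ (v : V) (w : G.Walk v v), w.IsCycle

/-- `L` is the maximum length of a cycle of `G`. -/
def IsMaxCycleLength {V : Type*} (G : SimpleGraph V) (L : ℕ) : Prop :=
  (∃ (v : V) (w : G.Walk v v), w.IsCycle ∧ w.length = L) ∧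
  ∀ (v : V) (w : G.Walk v v), w.IsCycle → w.length ≤ L

/-- `L` is the maximum length of an odd cycle of `G`. -/
def IsMaxOddCycleLength {V : Type*} (G : SimpleGraph V) (L : ℕ) : Prop :=
  Odd L ∧ (∃ (v : V) (w : G.Walk v v), w.IsCycle ∧ w.length = L) ∧
  ∀ (v : V) (w : G.Walk v v), w.IsCycle → Odd w.length → w.length ≤ L

/-- A connected graph is unicyclic if it contains exactly one cycle
(all cycles have the same edge set). -/
def IsUnicyclic {V : Type*} (G : SimpleGraph V) : Prop :=
  G.Connected ∧ HasCycle G ∧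
  ∀ (v : V) (w : G.Walk v v) (u : V) (w' : G.Walk u u), w.IsCycle → w'.IsCycle →
    {e | e ∈ w.edges} = {e | e ∈ w'.edges}

/-- An independent set of vertices: no two of its members are adjacent. -/
def IsIndepSet {V : Type*} (G : SimpleGraph V) (S : Finset V) : Prop :=
  ∀ i ∈ S, ∀ j ∈ S, ¬ G.Adj i j

/-- A maximal independent set. -/
def IsMaxIndepSet {V : Type*} (G : SimpleGraph V) (S : Finset V) : Prop :=
  IsIndepSet G S ∧ ∀ T : Finset V, IsIndepSet G T → S ⊆ T → S = T

/-- The number of connected bipartite components of `G`. -/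
noncomputable def numBipartiteComponents {V : Type*} (G : SimpleGraph V) : ℕ :=
  Nat.card {c : G.ConnectedComponent // IsBipartite (SimpleGraph.induce c.supp G)}

/-- A bipartition of `G` given by two finsets. -/
def IsBipartitionF {V : Type*} [Fintype V] [DecidableEq V] (G : SimpleGraph V)
    (X Y : Finset V) : Prop :=
  Disjoint X Y ∧ X ∪ Y = Finset.univ ∧
    ∀ ⦃i j⦄, G.Adj i j → (i ∈ X ∧ j ∈ Y) ∨ (i ∈ Y ∧ j ∈ X)

/-- `μ_G(i)`: the number of non-leaf edges of `G` incident with `i`. -/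
noncomputable def mu {V : Type*} (G : SimpleGraph V) (i : V) : ℕ :=
  {e ∈ G.edgeSet | i ∈ e ∧ e ∉ leafEdgeSet G}.ncard

/-- A monomial ideal: an ideal generated by monomials. -/
def IsMonomialIdeal {K σ : Type*} [Field K] (I : Ideal (MvPolynomial σ K)) : Prop :=
  ∃ S : Set (σ →₀ ℕ), I = Ideal.span ((fun m => MvPolynomial.monomial m (1 : K)) '' S)

section Graph
open SimpleGraph
open scoped Classical
variable {V : Type*} {G : SimpleGraph V}

lemma end_mem_support_tail : ∀ {a b : V} (w : G.Walk a b), w.length ≠ 0 → b ∈ w.support.tail := by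
  intro a b w hw
  cases w with
  | nil => simp at hw
  | cons h p => simpa [SimpleGraph.Walk.support_cons] using p.end_mem_support

lemma mem_tail_of_mem_support {a x : V} (w : G.Walk a a) (hl : w.length ≠ 0)
    (hx : x ∈ w.support) : x ∈ w.support.tail := by
  rw [SimpleGraph.Walk.support_eq_cons w] at hx
  rcases List.mem_cons.mp hx with rfl | hx
  · exact end_mem_support_tail w hl
  · exact hx

lemma tail_length {a b : V} (w : G.Walk a b) : w.support.tail.length = w.length := by
  have := SimpleGraph.Walk.length_support w
  simp [List.length_tail, this]

lemma not_isLeaf_of_two {x y z : V} (hyz : y ≠ z) (hy : G.Adj x y) (hz : G.Adj x z) :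
    ¬ IsLeaf G x := by
  intro h
  obtain ⟨j, hj⟩ := Set.ncard_eq_one.mp h
  have h1 : y = j := by have := hy; rw [← SimpleGraph.mem_neighborSet, hj] at this; exact this
  have h2 : z = j := by have := hz; rw [← SimpleGraph.mem_neighborSet, hj] at this; exact this
  exact hyz (h1.trans h2.symm)

lemma isCycle_based_not_leaf {x : V} (c : G.Walk x x) (hc : c.IsCycle) : ¬ IsLeaf G x := by
  have h3 := hc.three_le_length
  have hnn : ¬ c.Nil := by rw [SimpleGraph.Walk.nil_iff_length_eq]; omega
  obtain ⟨y, hxy, p, rfl⟩ := SimpleGraph.Walk.not_nil_iff.mp hnn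
  have hplen : p.length + 1 = (SimpleGraph.Walk.cons hxy p).length := by
    simp [SimpleGraph.Walk.length_cons]
  have hpnn : ¬ p.reverse.Nil := by
    rw [SimpleGraph.Walk.nil_iff_length_eq, SimpleGraph.Walk.length_reverse]; omega
  obtain ⟨z, hxz, q, hq⟩ := SimpleGraph.Walk.not_nil_iff.mp hpnn
  have hyz : y ≠ z := by
    rintro rfl
    have he : s(x, y) ∈ p.reverse.edges := by
      rw [hq]; simp [SimpleGraph.Walk.edges_cons]
    rw [SimpleGraph.Walk.edges_reverse, List.mem_reverse] at he
    have ht : (SimpleGraph.Walk.cons hxy p).IsTrail := hc.isTrail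
    rw [SimpleGraph.Walk.isTrail_cons] at ht
    exact ht.2 he
  exact not_isLeaf_of_two hyz hxy hxz

lemma cycle_vertex_not_leaf [DecidableEq V] {a x : V} (c : G.Walk a a) (hc : c.IsCycle)
    (hx : x ∈ c.support) : ¬ IsLeaf G x :=
  isCycle_based_not_leaf (c.rotate _ hx) (hc.rotate hx)

lemma find_attach {S : Set V} :
    ∀ {v b : V} (p : G.Walk v b), b ∈ S → p.IsPath → v ∉ S → ¬ IsLeaf G v →
      ∃ u, ¬ IsLeaf G u ∧ u ∉ S ∧ ∃ s ∈ S, G.Adj u s := by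
  intro v b p
  induction p with
  | nil => intro hb _ hv _; exact absurd hb hv
  | @cons v c b h q ih =>
    intro hb hp hv hleaf
    by_cases hc : c ∈ S
    · exact ⟨v, hleaf, hv, c, hc, h⟩
    · have hq : q.IsPath := hp.of_cons
      cases q with
      | nil => exact absurd hb hc
      | @cons c d b h₂ q' =>
        have hvd : v ≠ d := by
          have hnd := hp.support_nodup
          simp only [SimpleGraph.Walk.support_cons, List.nodup_cons] at hnd
          intro hvd'
          apply hnd.1
          rw [hvd']
          exact List.mem_cons_of_mem _ q'.start_mem_support
        have hcleaf : ¬ IsLeaf G c := not_isLeaf_of_two hvd h.symm h₂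
        exact ih hb hq hc hcleaf

lemma rotate_length' [DecidableEq V] {a : V} (w : G.Walk a a) {x : V}
    (hx : x ∈ w.support) : (w.rotate _ hx).length = w.length := by
  have h1 := (SimpleGraph.Walk.support_rotate w _ hx).perm.length_eq
  have h2 := SimpleGraph.Walk.length_support (w.rotate _ hx)
  have h3 := SimpleGraph.Walk.length_support w
  simp [List.length_tail, h2, h3] at h1
  exact SimpleGraph.Walk.length_rotate w _ hx

lemma mem_rotate_support [DecidableEq V] {a x s : V} (w : G.Walk a a) (hl : w.length ≠ 0)
    (hs : s ∈ w.support) : x ∈ (w.rotate _ hs).support ↔ x ∈ w.support := by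
  have hperm := (SimpleGraph.Walk.support_rotate w _ hs).perm
  have hl' : (w.rotate _ hs).length ≠ 0 := by rw [rotate_length' w hs]; exact hl
  constructor
  · intro hx
    exact List.mem_of_mem_tail (hperm.mem_iff.mp (mem_tail_of_mem_support _ hl' hx))
  · intro hx
    exact List.mem_of_mem_tail (hperm.mem_iff.mpr (mem_tail_of_mem_support _ hl hx))

lemma grow [Fintype V] [DecidableEq V] (hconn : G.Connected) :
    ∀ (t : ℕ) {a : V} (w : G.Walk a a), w.length ≠ 0 →
    (Finset.univ.filter (fun v => ¬ IsLeaf G v ∧ v ∉ w.support)).card ≤ t →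
    ∃ (b : V) (w' : G.Walk b b) (t' : ℕ), t' ≤ t ∧ w'.length = w.length + 2 * t' ∧
      (∀ x, ¬ IsLeaf G x → x ∈ w'.support) := by
  intro t
  induction t with
  | zero =>
    intro a w hl hcard
    refine ⟨a, w, 0, le_rfl, by omega, ?_⟩
    intro x hx
    by_contra hxs
    have : x ∈ Finset.univ.filter (fun v => ¬ IsLeaf G v ∧ v ∉ w.support) := by
      simp [hx, hxs]
    rw [Finset.card_eq_zero.mp (Nat.le_zero.mp hcard)] at this
    simp at this
  | succ t ih =>
    intro a w hl hcard
    by_cases hemp : (Finset.univ.filter (fun v => ¬ IsLeaf G v ∧ v ∉ w.support)) = ∅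
    · refine ⟨a, w, 0, Nat.zero_le _, by omega, ?_⟩
      intro x hx
      by_contra hxs
      have : x ∈ Finset.univ.filter (fun v => ¬ IsLeaf G v ∧ v ∉ w.support) := by
        simp [hx, hxs]
      simp [hemp] at this
    · obtain ⟨v, hv⟩ := Finset.nonempty_iff_ne_empty.mpr hemp
      simp only [Finset.mem_filter, Finset.mem_univ, true_and] at hv
      obtain ⟨hvleaf, hvs⟩ := hv
      have hreach : G.Reachable v a := hconn.preconnected v a
      obtain ⟨u, huleaf, hus, s, hsmem, hadj⟩ :
          ∃ u, ¬ IsLeaf G u ∧ u ∉ {x | x ∈ w.support} ∧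
            ∃ s ∈ {x | x ∈ w.support}, G.Adj u s := by
        refine hreach.elim_path fun pp => ?_
        exact find_attach pp.1 w.start_mem_support pp.2 hvs hvleaf
      have hsmem' : s ∈ w.support := hsmem
      let wr := w.rotate _ hsmem'
      let w' : G.Walk s s := SimpleGraph.Walk.cons hadj.symm (SimpleGraph.Walk.cons hadj wr)
      have hwr : wr.length = w.length := rotate_length' w hsmem'
      have hw'len : w'.length = w.length + 2 := by
        simp only [w', SimpleGraph.Walk.length_cons]
        omega
      have hmemw' : ∀ x, x ∈ w.support → x ∈ w'.support := by
        intro x hx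
        show x ∈ s :: u :: wr.support
        have : x ∈ wr.support := (mem_rotate_support w hl hsmem').mpr hx
        simp [this]
      have humem : u ∈ w'.support := by
        show u ∈ s :: u :: wr.support
        simp
      have hsub : (Finset.univ.filter (fun x => ¬ IsLeaf G x ∧ x ∉ w'.support)) ⊂
          (Finset.univ.filter (fun x => ¬ IsLeaf G x ∧ x ∉ w.support)) := by
        constructor
        · intro x hx
          simp only [Finset.mem_filter, Finset.mem_univ, true_and] at hx ⊢
          exact ⟨hx.1, fun hc => hx.2 (hmemw' x hc)⟩
        · intro hsup
          have : u ∈ Finset.univ.filter (fun x => ¬ IsLeaf G x ∧ x ∉ w.support) := by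
            simp only [Finset.mem_filter, Finset.mem_univ, true_and]
            exact ⟨huleaf, hus⟩
          have := hsup this
          simp only [Finset.mem_filter, Finset.mem_univ, true_and] at this
          exact this.2 humem
      have hcard' : (Finset.univ.filter (fun x => ¬ IsLeaf G x ∧ x ∉ w'.support)).card ≤ t := by
        have := Finset.card_lt_card hsub
        omega
      have hl' : w'.length ≠ 0 := by omega
      obtain ⟨b, w'', t'', ht'', hlen'', hcov⟩ := ih w' hl' hcard'
      exact ⟨b, w'', t'' + 1, by omega, by omega, hcov⟩

lemma pad {a : V} : ∀ (d : ℕ) (w : G.Walk a a), w.length ≠ 0 →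
    ∃ w' : G.Walk a a, w'.length = w.length + 2 * d ∧ ∀ x ∈ w.support, x ∈ w'.support := by
  intro d
  induction d with
  | zero => intro w _; exact ⟨w, by omega, fun x h => h⟩
  | succ d ih =>
    intro w hl
    obtain ⟨w1, hw1len, hw1mem⟩ := ih w hl
    have hl1 : w1.length ≠ 0 := by omega
    have hnn : ¬ w1.Nil := by rw [SimpleGraph.Walk.nil_iff_length_eq]; exact hl1
    obtain ⟨c, hac, p, rfl⟩ := SimpleGraph.Walk.not_nil_iff.mp hnn
    refine ⟨SimpleGraph.Walk.cons hac (SimpleGraph.Walk.cons hac.symm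
      (SimpleGraph.Walk.cons hac p)), ?_, ?_⟩
    · simp only [SimpleGraph.Walk.length_cons] at hw1len ⊢
      omega
    · intro x hx
      show x ∈ a :: c :: (SimpleGraph.Walk.cons hac p).support
      exact List.mem_cons_of_mem _ (List.mem_cons_of_mem _ (hw1mem x hx))
      
lemma walk_stuck {v j : V} (hv : G.neighborSet v = {j}) (hj : G.neighborSet j = {v}) :
    ∀ {y x : V} (p : G.Walk y x), (y = v ∨ y = j) → x = v ∨ x = j := by
  intro y x p
  induction p with
  | nil => exact fun h => h
  | @cons y c x h q ih =>
    intro hy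
    apply ih
    rcases hy with rfl | rfl
    · right
      have : c ∈ G.neighborSet y := h
      rw [hv] at this
      exact this
    · left
      have : c ∈ G.neighborSet y := h
      rw [hj] at this
      exact this

lemma leaf_nbr_not_leaf (hconn : G.Connected) {x0 : V} (hx0 : ¬ IsLeaf G x0)
    {v j : V} (hvleaf : IsLeaf G v) (hadj : G.Adj v j) : ¬ IsLeaf G j := by
  intro hjleaf
  have hNv : G.neighborSet v = {j} := by
    obtain ⟨a, ha⟩ := Set.ncard_eq_one.mp hvleaf
    have : j ∈ G.neighborSet v := hadj
    rw [ha] at this ⊢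
    rw [Set.mem_singleton_iff] at this
    rw [this]
  have hNj : G.neighborSet j = {v} := by
    obtain ⟨a, ha⟩ := Set.ncard_eq_one.mp hjleaf
    have : v ∈ G.neighborSet j := hadj.symm
    rw [ha] at this ⊢
    rw [Set.mem_singleton_iff] at this
    rw [this]
  obtain ⟨p⟩ := hconn.preconnected v x0
  rcases walk_stuck hNv hNj p (Or.inl rfl) with rfl | rfl
  · exact hx0 hvleaf
  · exact hx0 hjleaf

lemma eps0_le_leaves [Fintype V] [DecidableEq V] [Nonempty V] (G : SimpleGraph V) :
    eps0 G ≤ (Finset.univ.filter (fun v => IsLeaf G v)).card := by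
  classical
  have key : ∀ {e : Sym2 V} {w : V}, e ∈ G.edgeSet → w ∈ e → IsLeaf G w →
      ∀ {e' : Sym2 V}, e' ∈ G.edgeSet → w ∈ e' → e = e' := by
    intro e w he hwe hwleaf e' he' hwe'
    obtain ⟨a, ha⟩ := Set.ncard_eq_one.mp hwleaf
    have h1 : s(w, (Sym2.Mem.other hwe)) = e := Sym2.other_spec hwe
    have h2 : s(w, (Sym2.Mem.other hwe')) = e' := Sym2.other_spec hwe'
    have ho1 : Sym2.Mem.other hwe ∈ G.neighborSet w := by
      rw [SimpleGraph.mem_neighborSet, ← SimpleGraph.mem_edgeSet, h1]; exact he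
    have ho2 : Sym2.Mem.other hwe' ∈ G.neighborSet w := by
      rw [SimpleGraph.mem_neighborSet, ← SimpleGraph.mem_edgeSet, h2]; exact he'
    rw [ha, Set.mem_singleton_iff] at ho1 ho2
    rw [← h1, ← h2, ho1, ho2]
  have hle : (leafEdgeSet G).ncard ≤
      ((Finset.univ.filter (fun v => IsLeaf G v) : Finset V) : Set V).ncard := by
    apply Set.ncard_le_ncard_of_injOn
      (fun e => if h : ∃ v, v ∈ e ∧ IsLeaf G v then h.choose else Classical.arbitrary V)
    · intro e he
      obtain ⟨hedge, hex⟩ := he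
      simp only [dif_pos hex]
      have := hex.choose_spec
      simp [this.2]
    · intro e1 h1 e2 h2 heq
      obtain ⟨hedge1, hex1⟩ := h1
      obtain ⟨hedge2, hex2⟩ := h2
      simp only [dif_pos hex1, dif_pos hex2] at heq
      have s1 := hex1.choose_spec
      have s2 := hex2.choose_spec
      have hmem2 : hex1.choose ∈ e2 := by rw [heq]; exact s2.1
      exact key hedge1 s1.1 s1.2 hedge2 hmem2
  rw [Set.ncard_coe_finset] at hle
  exact hle

end Graph

section Alg
variable {K : Type*} [Field K] {V : Type*}

/-- product of variables over a list of vertices -/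
noncomputable def vprod (K : Type*) [Field K] {V : Type*} (l : List V) : MvPolynomial V K :=
  (l.map MvPolynomial.X).prod

@[simp] lemma vprod_cons (a : V) (l : List V) :
    vprod K (a :: l) = MvPolynomial.X a * vprod K l := by simp [vprod]

lemma edge_mem {G : SimpleGraph V} {i j : V} (h : G.Adj i j) :
    (X i * X j : MvPolynomial V K) ∈ edgeIdeal K G :=
  Ideal.subset_span ⟨i, j, h, rfl⟩

lemma even_walk_mem (G : SimpleGraph V) :
    ∀ (m : ℕ) {a b : V} (w : G.Walk a b), w.length = 2 * m →
      vprod K w.support.tail ∈ (edgeIdeal K G) ^ m := by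
  intro m
  induction m with
  | zero =>
    intro a b w hw
    have h1 : w.support.tail.length = 0 := by
      have := SimpleGraph.Walk.length_support w
      simp [List.length_tail, this, hw]
    rw [List.eq_nil_of_length_eq_zero h1]
    simp [vprod]
  | succ m ih =>
    intro a b w hw
    cases w with
    | nil => simp at hw
    | cons h p =>
      cases p with
      | nil => simp at hw; omega
      | cons h2 q =>
        have hq : q.length = 2 * m := by simp [SimpleGraph.Walk.length_cons] at hw; omega
        simp only [SimpleGraph.Walk.support_cons, List.tail_cons]
        rw [SimpleGraph.Walk.support_eq_cons q, vprod_cons, vprod_cons, ← mul_assoc,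
          pow_succ']
        exact Ideal.mul_mem_mul (edge_mem h2) (ih q hq)

lemma odd_closed_base (G : SimpleGraph V) (m : ℕ) {a : V} (w : G.Walk a a)
    (hw : w.length = 2 * m + 1) :
    MvPolynomial.X a * vprod K w.support.tail ∈ (edgeIdeal K G) ^ (m + 1) := by
  cases w with
  | nil => simp at hw
  | cons h p =>
    have hp : p.length = 2 * m := by simp at hw; omega
    have hsup : (SimpleGraph.Walk.cons h p).support.tail = p.support := by
      simp [SimpleGraph.Walk.support_cons]
    rw [hsup, SimpleGraph.Walk.support_eq_cons p, vprod_cons, ← mul_assoc, pow_succ']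
    exact Ideal.mul_mem_mul (edge_mem h) (even_walk_mem G m p hp)

lemma odd_closed_nbr (G : SimpleGraph V) (m : ℕ) {j : V} (w : G.Walk j j)
    (hw : w.length = 2 * m + 1) {v : V} (hadj : G.Adj v j) :
    MvPolynomial.X v * vprod K w.support.tail ∈ (edgeIdeal K G) ^ (m + 1) := by
  cases w with
  | nil => simp at hw
  | cons h p =>
    have hp : p.reverse.length = 2 * m := by simp at hw ⊢; omega
    have hsup : (SimpleGraph.Walk.cons h p).support.tail = p.support := by
      simp [SimpleGraph.Walk.support_cons]
    rw [hsup]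
    have hperm : vprod K p.support = vprod K p.reverse.support := by
      unfold vprod
      rw [SimpleGraph.Walk.support_reverse, List.map_reverse, List.prod_reverse]
    rw [hperm, SimpleGraph.Walk.support_eq_cons p.reverse, vprod_cons, ← mul_assoc,
      pow_succ']
    exact Ideal.mul_mem_mul (edge_mem hadj) (even_walk_mem G m p.reverse hp)

lemma rotate_tail_prod [DecidableEq V] {G : SimpleGraph V} {a : V} (w : G.Walk a a) {x : V}
    (hx : x ∈ w.support) :
    vprod K (w.rotate _ hx).support.tail = vprod K w.support.tail := by
  unfold vprod
  exact ((SimpleGraph.Walk.support_rotate w _ hx).perm.map _).prod_eq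

lemma rotate_length [DecidableEq V] {G : SimpleGraph V} {a : V} (w : G.Walk a a) {x : V}
    (hx : x ∈ w.support) : (w.rotate _ hx).length = w.length := by
  have h1 := (SimpleGraph.Walk.support_rotate w _ hx).perm.length_eq
  have h2 := SimpleGraph.Walk.length_support (w.rotate _ hx)
  have h3 := SimpleGraph.Walk.length_support w
  simp [List.length_tail, h2, h3] at h1
  exact SimpleGraph.Walk.length_rotate w _ hx

lemma closed_walk_mul_mem [DecidableEq V] (G : SimpleGraph V) (m : ℕ) {a : V} (w : G.Walk a a)
    (hw : w.length = 2 * m + 1) (v : V)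
    (hv : v ∈ w.support ∨ ∃ j ∈ w.support, G.Adj v j) :
    MvPolynomial.X v * vprod K w.support.tail ∈ (edgeIdeal K G) ^ (m + 1) := by
  rcases hv with hv | ⟨j, hj, hadj⟩
  · rw [← rotate_tail_prod w hv]
    exact odd_closed_base G m (w.rotate _ hv) (by rw [rotate_length w hv, hw])
  · rw [← rotate_tail_prod w hj]
    exact odd_closed_nbr G m (w.rotate _ hj) (by rw [rotate_length w hj, hw]) hadj

lemma vprod_not_mem (G : SimpleGraph V) {n : ℕ} (hn : 1 ≤ n) (l : List V)
    (hl : l.length = 2 * n - 1) : vprod K l ∉ (edgeIdeal K G) ^ n := by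
  intro hmem
  set φ : MvPolynomial V K →ₐ[K] Polynomial K := aeval (fun _ => Polynomial.X) with hφdef
  have h1 : Ideal.map (φ : MvPolynomial V K →+* Polynomial K) (edgeIdeal K G)
      ≤ Ideal.span {(Polynomial.X : Polynomial K) ^ 2} := by
    rw [edgeIdeal, Ideal.map_span]
    apply Ideal.span_le.mpr
    rintro q ⟨p, ⟨i, j, hadj, rfl⟩, rfl⟩
    have : (φ : MvPolynomial V K →+* Polynomial K) (X i * X j)
        = (Polynomial.X : Polynomial K) ^ 2 := by
      simp [hφdef, pow_two]
    rw [this]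
    exact Ideal.subset_span rfl
  have h2 : (φ : MvPolynomial V K →+* Polynomial K) (vprod K l)
      ∈ Ideal.span {(Polynomial.X : Polynomial K) ^ (2 * n)} := by
    have hm : (φ : MvPolynomial V K →+* Polynomial K) (vprod K l)
        ∈ Ideal.map (φ : MvPolynomial V K →+* Polynomial K) ((edgeIdeal K G) ^ n) :=
      Ideal.mem_map_of_mem _ hmem
    rw [Ideal.map_pow] at hm
    have h3 : (Ideal.map (φ : MvPolynomial V K →+* Polynomial K) (edgeIdeal K G)) ^ n
        ≤ (Ideal.span {(Polynomial.X : Polynomial K) ^ 2}) ^ n :=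
      Ideal.pow_right_mono h1 n
    have h4 := h3 hm
    rwa [Ideal.span_singleton_pow, ← pow_mul, mul_comm 2 n, mul_comm n 2] at h4
  have hφ : (φ : MvPolynomial V K →+* Polynomial K) (vprod K l)
      = Polynomial.X ^ (2 * n - 1) := by
    show φ (vprod K l) = _
    unfold vprod
    rw [map_list_prod, List.map_map]
    have : (l.map (φ ∘ X)) = List.replicate l.length Polynomial.X := by
      apply List.eq_replicate_iff.mpr
      refine ⟨by simp, ?_⟩
      intro b hb
      simp only [List.mem_map] at hb
      obtain ⟨c, _, rfl⟩ := hb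
      simp [hφdef]
    rw [this, List.prod_replicate, hl]
  rw [hφ, Ideal.mem_span_singleton] at h2
  have hdeg := Polynomial.natDegree_le_of_dvd h2 (pow_ne_zero _ Polynomial.X_ne_zero)
  simp [Polynomial.natDegree_pow, Polynomial.natDegree_X] at hdeg
  omega

lemma depthQ_eq_zero {J : Ideal (MvPolynomial V K)} (u : MvPolynomial V K)
    (hu : u ∉ J) (hx : ∀ v : V, MvPolynomial.X v * u ∈ J) : depthQ K J = 0 := by
  have hsub : {n : ℕ | ∃ rs : List (MvPolynomial V K), rs.length = n ∧
      (∀ x ∈ rs, x ∈ maxIdeal K V) ∧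
      RingTheory.Sequence.IsRegular (MvPolynomial V K ⧸ J) rs} ⊆ {0} := by
    rintro n ⟨rs, hlen, hmem, hreg⟩
    cases rs with
    | nil => simpa using hlen.symm
    | cons x rest =>
      exfalso
      have hxm : x ∈ maxIdeal K V := hmem x List.mem_cons_self
      have key : ∀ y, y ∈ maxIdeal K V → y * u ∈ J := by
        intro y hy
        rw [maxIdeal] at hy
        induction hy using Submodule.span_induction with
        | mem z hz => obtain ⟨v, rfl⟩ := hz; exact hx v
        | zero => simpa using J.zero_mem
        | add y z _ _ hy hz => rw [add_mul]; exact J.add_mem hy hz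
        | smul c y _ hy =>
          rw [smul_eq_mul, mul_assoc]
          exact Ideal.mul_mem_left _ _ hy
      have hxJ : x * u ∈ J := key x hxm
      have hsr : IsSMulRegular (MvPolynomial V K ⧸ J) x :=
        ((RingTheory.Sequence.isRegular_cons_iff _ _ _).mp hreg).1
      have h0 : x • (Ideal.Quotient.mk J u) = x • (0 : MvPolynomial V K ⧸ J) := by
        rw [smul_zero]
        have heq : x • (Ideal.Quotient.mk J u) = Ideal.Quotient.mk J (x * u) := rfl
        rw [heq, Ideal.Quotient.eq_zero_iff_mem]
        exact hxJ
      have := hsr h0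
      rw [Ideal.Quotient.eq_zero_iff_mem] at this
      exact hu this
  rcases Set.subset_singleton_iff_eq.mp hsub with h | h
  · unfold depthQ; rw [h]; simpa using csSup_empty
  · unfold depthQ; rw [h, csSup_singleton]

end Alg

/-- For a connected nonbipartite graph `G` whose maximum odd
cycle length is `2k − 1`, `dstab(I(G)) ≤ υ(G) − ε₀(G) − k + 1`. -/
theorem dstab_connected_nonbipartite_le (K : Type*) [Field K] {r : ℕ}
    (G : SimpleGraph (Fin r)) (hG : ∀ v, ∃ w, G.Adj v w)
    (hconn : G.Connected) (hnb : ¬ IsBipartite G) (k : ℕ)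
    (hmax : IsMaxOddCycleLength G (2 * k - 1)) :
    (dstab K (edgeIdeal K G) : ℤ) ≤ (r : ℤ) - (eps0 G : ℤ) - (k : ℤ) + 1 := by
  classical
  obtain ⟨hodd, ⟨a, c, hcyc, hclen⟩, hmaxlen⟩ := hmax
  have h3 : 3 ≤ c.length := hcyc.three_le_length
  have hk : 2 ≤ k := by omega
  have hne : Nonempty (Fin r) := ⟨a⟩
  set NL := Finset.univ.filter (fun v => ¬ IsLeaf G v) with hNLdef
  set L := Finset.univ.filter (fun v => IsLeaf G v) with hLdef
  have hsum : L.card + NL.card = r := by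
    rw [hLdef, hNLdef]
    rw [Finset.card_filter_add_card_filter_not]
    simp
  have hLle : eps0 G ≤ L.card := eps0_le_leaves G
  have hnodup : c.support.tail.Nodup := hcyc.support_nodup
  have htlen : c.support.tail.length = 2 * k - 1 := by rw [tail_length, hclen]
  have hsubNL : c.support.tail.toFinset ⊆ NL := by
    intro x hx
    rw [List.mem_toFinset] at hx
    simp only [hNLdef, Finset.mem_filter, Finset.mem_univ, true_and]
    exact cycle_vertex_not_leaf c hcyc (List.mem_of_mem_tail hx)
  have htcard : c.support.tail.toFinset.card = 2 * k - 1 := by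
    rw [List.toFinset_card_of_nodup hnodup, htlen]
  set A := Finset.univ.filter (fun v => ¬ IsLeaf G v ∧ v ∉ c.support) with hAdef
  have hdisj : Disjoint A c.support.tail.toFinset := by
    rw [Finset.disjoint_left]
    intro x hxA hxB
    simp only [hAdef, Finset.mem_filter, Finset.mem_univ, true_and] at hxA
    rw [List.mem_toFinset] at hxB
    exact hxA.2 (List.mem_of_mem_tail hxB)
  have hUsub : A ∪ c.support.tail.toFinset ⊆ NL := by
    intro x hx
    rcases Finset.mem_union.mp hx with hx | hx
    · simp only [hAdef, Finset.mem_filter, Finset.mem_univ, true_and] at hx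
      simp only [hNLdef, Finset.mem_filter, Finset.mem_univ, true_and]
      exact hx.1
    · exact hsubNL hx
  have ht0 : A.card + (2 * k - 1) ≤ NL.card := by
    rw [← htcard, ← Finset.card_union_of_disjoint hdisj]
    exact Finset.card_le_card hUsub
  have hcl0 : c.length ≠ 0 := by omega
  obtain ⟨b, w1, t', ht', hw1len, hw1cov⟩ := grow hconn A.card c hcl0 le_rfl
  have hw1l0 : w1.length ≠ 0 := by omega
  have hkey : ∀ n : ℕ, r - eps0 G - k + 1 ≤ n →
      depthQ K (edgeIdeal K G ^ n) = 0 := by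
    intro n hn
    have hkt : k + t' ≤ n := by omega
    obtain ⟨w2, hw2len, hw2mem⟩ := pad (n - (k + t')) w1 hw1l0
    have hw2len' : w2.length = 2 * n - 1 := by omega
    have hnot : vprod K w2.support.tail ∉ edgeIdeal K G ^ n :=
      vprod_not_mem G (by omega) _ (by rw [tail_length, hw2len'])
    have hdom : ∀ v : Fin r, MvPolynomial.X v * vprod K w2.support.tail
        ∈ edgeIdeal K G ^ n := by
      intro v
      have hmm : w2.length = 2 * (n - 1) + 1 := by omega
      have hdomhyp : v ∈ w2.support ∨ ∃ j ∈ w2.support, G.Adj v j := by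
        by_cases hvleaf : IsLeaf G v
        · obtain ⟨j, hj⟩ := Set.ncard_eq_one.mp hvleaf
          have hadj : G.Adj v j := by
            have : j ∈ G.neighborSet v := by rw [hj]; exact Set.mem_singleton j
            exact this
          have hjnl : ¬ IsLeaf G j :=
            leaf_nbr_not_leaf hconn (isCycle_based_not_leaf c hcyc) hvleaf hadj
          exact Or.inr ⟨j, hw2mem j (hw1cov j hjnl), hadj⟩
        · exact Or.inl (hw2mem v (hw1cov v hvleaf))
      have hmem := closed_walk_mul_mem (K := K) G (n - 1) w2 hmm v hdomhyp
      have hn1 : n - 1 + 1 = n := by omega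
      rwa [hn1] at hmem
    exact depthQ_eq_zero _ hnot hdom
  have hmem : (r - eps0 G - k + 1) ∈ {n₀ : ℕ | 1 ≤ n₀ ∧ ∀ n : ℕ, n₀ ≤ n →
      depthQ K (edgeIdeal K G ^ n) = depthQ K (edgeIdeal K G ^ (r - eps0 G - k + 1))} := by
    refine ⟨by omega, fun n hn => ?_⟩
    rw [hkey n hn, hkey _ le_rfl]
  have hd : dstab K (edgeIdeal K G) ≤ r - eps0 G - k + 1 := Nat.sInf_le hmem
  have hge : eps0 G + k ≤ r := by omega
  omega
end

section
/- Let G be a bipartite finite simple graph without isolated vertices, let α = (α_1,…,α_r) ∈ ℕ^r, let n ≥ 1, and let F be an independent set of G. Then the monomial x^α = x_1^{α_1}⋯x_r^{α_r} satisfies x^α·(∏_{i∈F} x_i)^k ∉ I(G)^n for every integer k ≥ 0 if and only if there exists a maximal independent set H of G with F ⊆ H and Σ_{i∉H} α_i ≤ n − 1. (In particular, taking F = ∅: x^α ∈ I(G)^n if and only if Σ_{i∉H} α_i ≥ n for every maximal independent set H of G.) -/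
open MvPolynomial

section AuxEdge

open Finset

variable {r : ℕ} {K : Type*} [Field K]

/-- degree (exponent) vector of a multiset of (ordered) edges -/
noncomputable def edgeDeg (M : Multiset (Fin r × Fin r)) : Fin r →₀ ℕ :=
  (M.map fun p => Finsupp.single p.1 1 + Finsupp.single p.2 1).sum

lemma edgeDeg_zero : edgeDeg (0 : Multiset (Fin r × Fin r)) = 0 := rfl

lemma edgeDeg_cons (p : Fin r × Fin r) (M : Multiset (Fin r × Fin r)) :
    edgeDeg (p ::ₘ M) = (Finsupp.single p.1 1 + Finsupp.single p.2 1) + edgeDeg M := by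
  simp [edgeDeg]

lemma edgeDeg_add (M N : Multiset (Fin r × Fin r)) :
    edgeDeg (M + N) = edgeDeg M + edgeDeg N := by
  simp [edgeDeg]

lemma edgeDeg_apply (M : Multiset (Fin r × Fin r)) (v : Fin r) :
    edgeDeg M v
      = (M.map fun p => (if p.1 = v then 1 else 0) + (if p.2 = v then 1 else 0)).sum := by
  induction M using Multiset.induction with
  | empty => simp [edgeDeg_zero]
  | cons a s ih =>
    rw [edgeDeg_cons, Multiset.map_cons, Multiset.sum_cons, ← ih]
    simp [Finsupp.single_apply]

lemma multiset_prod_mem_pow {R : Type*} [CommRing R] (I : Ideal R)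
    (M : Multiset R) (h : ∀ x ∈ M, x ∈ I) : M.prod ∈ I ^ Multiset.card M := by
  induction M using Multiset.induction with
  | empty => simp
  | cons a s ih =>
    simp only [Multiset.prod_cons, Multiset.card_cons, pow_succ']
    exact Ideal.mul_mem_mul (h a (Multiset.mem_cons_self a s))
      (ih fun x hx => h x (Multiset.mem_cons_of_mem hx))

lemma monomial_edgeDeg_eq (M : Multiset (Fin r × Fin r)) :
    (monomial (edgeDeg M) (1 : K))
      = (M.map fun p => (X p.1 * X p.2 : MvPolynomial (Fin r) K)).prod := by
  induction M using Multiset.induction with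
  | empty => simp [edgeDeg_zero]
  | cons a s ih =>
    have hx : (X a.1 * X a.2 : MvPolynomial (Fin r) K) =
        monomial (Finsupp.single a.1 1 + Finsupp.single a.2 1) 1 := by
      rw [X, X, monomial_mul, one_mul]
    rw [Multiset.map_cons, Multiset.prod_cons, ← ih, edgeDeg_cons, hx, monomial_mul, one_mul]

/-- exponent vectors of products of `n` edge generators -/
def edgeExps (G : SimpleGraph (Fin r)) (n : ℕ) : Set (Fin r →₀ ℕ) :=
  {d | ∃ M : Multiset (Fin r × Fin r), Multiset.card M = n ∧
    (∀ p ∈ M, G.Adj p.1 p.2) ∧ d = edgeDeg M}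

lemma edgeIdeal_eq_span_monomials (G : SimpleGraph (Fin r)) :
    edgeIdeal K G = Ideal.span ((fun m => monomial m (1 : K)) '' edgeExps G 1) := by
  unfold edgeIdeal
  congr 1
  ext x
  constructor
  · rintro ⟨i, j, hij, rfl⟩
    refine ⟨edgeDeg {(i, j)}, ⟨{(i, j)}, by simp, ?_, rfl⟩, ?_⟩
    · intro p hp; rw [Multiset.mem_singleton] at hp; subst hp; exact hij
    · show (monomial (edgeDeg {(i,j)})) (1:K) = X i * X j
      rw [monomial_edgeDeg_eq]; simp
  · rintro ⟨d, ⟨M, hc, he, rfl⟩, rfl⟩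
    obtain ⟨p, hp⟩ := Multiset.exists_mem_of_ne_zero (show M ≠ 0 by
      intro h0; rw [h0] at hc; simp at hc)
    obtain ⟨M', rfl⟩ := Multiset.exists_cons_of_mem hp
    have hM' : M' = 0 := by
      rw [Multiset.card_cons] at hc
      exact Multiset.card_eq_zero.mp (by omega)
    subst hM'
    exact ⟨p.1, p.2, he p (Multiset.mem_cons_self _ _), by
      show (monomial (edgeDeg {p})) (1:K) = _
      rw [monomial_edgeDeg_eq]; simp⟩

lemma edgeIdeal_pow_eq_span (G : SimpleGraph (Fin r)) (n : ℕ) :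
    edgeIdeal K G ^ n = Ideal.span ((fun m => monomial m (1 : K)) '' edgeExps G n) := by
  induction n with
  | zero =>
    rw [pow_zero]
    have : edgeExps (r := r) G 0 = {0} := by
      ext d
      constructor
      · rintro ⟨M, hc, -, rfl⟩
        rw [Multiset.card_eq_zero.mp hc]; rfl
      · rintro rfl
        exact ⟨0, rfl, by simp, rfl⟩
    rw [this]
    simp only [Set.image_singleton, monomial_zero', MvPolynomial.C_1]
    rw [Ideal.span_singleton_one, Ideal.one_eq_top]
  | succ m ih =>
    rw [pow_succ, ih, edgeIdeal_eq_span_monomials, Ideal.span_mul_span]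
    congr 1
    ext x
    constructor
    · intro hx
      simp only [Set.mem_mul] at hx
      obtain ⟨a, ⟨d, ⟨M, hMc, hMe, rfl⟩, rfl⟩, b, ⟨e, ⟨N, hNc, hNe, rfl⟩, rfl⟩, rfl⟩ := hx
      refine ⟨edgeDeg (M + N), ⟨M + N, by simp [hMc, hNc], ?_, rfl⟩, ?_⟩
      · intro p hp
        rcases Multiset.mem_add.mp hp with h | h
        · exact hMe p h
        · exact hNe p h
      · show (fun m => (monomial m) (1:K)) _ = _ * _
        dsimp only
        rw [edgeDeg_add, monomial_mul, one_mul]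
    · rintro ⟨d, ⟨M, hc, he, rfl⟩, rfl⟩
      obtain ⟨p, hp⟩ := Multiset.exists_mem_of_ne_zero (show M ≠ 0 by
        intro h0; rw [h0] at hc; simp at hc)
      obtain ⟨M', rfl⟩ := Multiset.exists_cons_of_mem hp
      rw [Multiset.card_cons] at hc
      simp only [Set.mem_iUnion, Set.mem_singleton_iff]
      refine ⟨monomial (edgeDeg M') 1, ⟨edgeDeg M', ⟨M', by omega,
        fun q hq => he q (Multiset.mem_cons_of_mem hq), rfl⟩, rfl⟩,
        monomial (edgeDeg {p}) 1, ⟨edgeDeg {p}, ⟨{p}, by simp, ?_, rfl⟩, rfl⟩, ?_⟩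
      · intro q hq; rw [Multiset.mem_singleton] at hq; subst hq
        exact he q (Multiset.mem_cons_self _ _)
      · dsimp only; rw [monomial_mul, one_mul]
        congr 1
        rw [show p ::ₘ M' = M' + {p} by rw [add_comm]; rfl, edgeDeg_add]

lemma monomial_mem_pow_iff (G : SimpleGraph (Fin r)) (n : ℕ) (β : Fin r →₀ ℕ) :
    monomial β (1 : K) ∈ edgeIdeal K G ^ n ↔
      ∃ M : Multiset (Fin r × Fin r), Multiset.card M = n ∧
        (∀ p ∈ M, G.Adj p.1 p.2) ∧ edgeDeg M ≤ β := by
  classical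
  rw [edgeIdeal_pow_eq_span, mem_ideal_span_monomial_image]
  rw [support_monomial, if_neg (one_ne_zero : (1:K) ≠ 0)]
  constructor
  · intro h
    obtain ⟨d, ⟨M, hc, he, rfl⟩, hle⟩ := h β (Finset.mem_singleton_self β)
    exact ⟨M, hc, he, hle⟩
  · rintro ⟨M, hc, he, hle⟩ xi hxi
    rw [Finset.mem_singleton] at hxi; subst hxi
    exact ⟨edgeDeg M, ⟨M, hc, he, rfl⟩, hle⟩

lemma prod_X_pow_eq_monomial' (f : Fin r → ℕ) :
    (∏ i, (X i : MvPolynomial (Fin r) K) ^ f i)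
      = monomial (Finsupp.equivFunOnFinite.symm f) (1 : K) := by
  rw [monomial_eq, C_1, one_mul,
    Finsupp.prod_fintype (M := ℕ) (N := MvPolynomial (Fin r) K) _ _ (fun i => pow_zero _)]
  exact Finset.prod_congr rfl fun i _ => by
    rw [Finsupp.coe_equivFunOnFinite_symm]

lemma lhs_eq_monomial (α : Fin r → ℕ) (F : Finset (Fin r)) (k : ℕ) :
    (∏ i, (X i : MvPolynomial (Fin r) K) ^ α i) *
        (∏ i ∈ F, (X i : MvPolynomial (Fin r) K)) ^ k
      = monomial (Finsupp.equivFunOnFinite.symm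
          (fun i => α i + if i ∈ F then k else 0)) (1 : K) := by
  classical
  have h1 : (∏ i ∈ F, (X i : MvPolynomial (Fin r) K)) ^ k
      = ∏ i, (X i : MvPolynomial (Fin r) K) ^ (if i ∈ F then k else 0) := by
    rw [← Finset.prod_pow]
    have h2 : ∏ i ∈ F, (X i : MvPolynomial (Fin r) K) ^ k
        = ∏ i ∈ F, (X i : MvPolynomial (Fin r) K) ^ (if i ∈ F then k else 0) :=
      Finset.prod_congr rfl fun x hx => by rw [if_pos hx]
    rw [h2]
    exact Finset.prod_subset (Finset.subset_univ F) fun x _ hx => by rw [if_neg hx, pow_zero]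
  rw [h1, ← Finset.prod_mul_distrib]
  simp_rw [← pow_add]
  exact prod_X_pow_eq_monomial' _

lemma sum_edgeDeg_cover {G : SimpleGraph (Fin r)} {M : Multiset (Fin r × Fin r)}
    (hM : ∀ p ∈ M, G.Adj p.1 p.2) {C : Finset (Fin r)}
    (hC : ∀ ⦃i j⦄, G.Adj i j → i ∈ C ∨ j ∈ C) :
    Multiset.card M ≤ ∑ i ∈ C, edgeDeg M i := by
  induction M using Multiset.induction with
  | empty => simp
  | cons a s ih =>
    have hs : Multiset.card s ≤ ∑ i ∈ C, edgeDeg s i :=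
      ih fun p hp => hM p (Multiset.mem_cons_of_mem hp)
    have ha : 1 ≤ ∑ i ∈ C, ((Finsupp.single a.1 1 + Finsupp.single a.2 1 : Fin r →₀ ℕ) i) := by
      rcases hC (hM a (Multiset.mem_cons_self a s)) with h | h
      · calc 1 ≤ (Finsupp.single a.1 1 + Finsupp.single a.2 1 : Fin r →₀ ℕ) a.1 := by
              simp [Finsupp.single_apply]
          _ ≤ _ := Finset.single_le_sum (fun i _ => Nat.zero_le _) h
      · calc 1 ≤ (Finsupp.single a.1 1 + Finsupp.single a.2 1 : Fin r →₀ ℕ) a.2 := by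
              simp [Finsupp.single_apply]
          _ ≤ _ := Finset.single_le_sum (fun i _ => Nat.zero_le _) h
    rw [Multiset.card_cons]
    calc Multiset.card s + 1
        ≤ (∑ i ∈ C, edgeDeg s i) + ∑ i ∈ C, ((Finsupp.single a.1 1 + Finsupp.single a.2 1 : Fin r →₀ ℕ) i) :=
          Nat.add_le_add hs ha
      _ = ∑ i ∈ C, edgeDeg (a ::ₘ s) i := by
          rw [← Finset.sum_add_distrib]
          refine Finset.sum_congr rfl fun i _ => ?_
          rw [edgeDeg_cons]; simp [add_comm]

lemma compl_cover_of_indep {G : SimpleGraph (Fin r)} {H : Finset (Fin r)}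
    (h : IsIndepSet G H) : ∀ ⦃i j⦄, G.Adj i j → i ∈ Hᶜ ∨ j ∈ Hᶜ := by
  intro i j hij
  by_contra hc
  push_neg at hc
  simp only [Finset.mem_compl, not_not] at hc
  exact h i hc.1 j hc.2 hij

lemma indep_of_compl_cover {G : SimpleGraph (Fin r)} {C : Finset (Fin r)}
    (h : ∀ ⦃i j⦄, G.Adj i j → i ∈ C ∨ j ∈ C) : IsIndepSet G Cᶜ := by
  intro i hi j hj hij
  rcases h hij with hc | hc
  · exact (Finset.mem_compl.mp hi) hc
  · exact (Finset.mem_compl.mp hj) hc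

lemma exists_maxIndep_superset (G : SimpleGraph (Fin r)) (S : Finset (Fin r))
    (hS : IsIndepSet G S) : ∃ H, IsMaxIndepSet G H ∧ S ⊆ H := by
  classical
  let 𝒮 : Finset (Finset (Fin r)) :=
    Finset.univ.filter (fun T => S ⊆ T ∧ IsIndepSet G T)
  have hne : 𝒮.Nonempty := ⟨S, by simp [𝒮, hS]⟩
  obtain ⟨H, hH, hmax⟩ := Finset.exists_max_image 𝒮 Finset.card hne
  simp only [𝒮, Finset.mem_filter, Finset.mem_univ, true_and] at hH
  refine ⟨H, ⟨hH.2, ?_⟩, hH.1⟩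
  intro T hT hHT
  have hT𝒮 : T ∈ 𝒮 := by
    simp only [𝒮, Finset.mem_filter, Finset.mem_univ, true_and]
    exact ⟨hH.1.trans hHT, hT⟩
  exact Finset.eq_of_subset_of_card_le hHT (hmax T hT𝒮)

lemma koenig (G : SimpleGraph (Fin r)) (hb : IsBipartite G) (α : Fin r → ℕ) (n : ℕ)
    (hcov : ∀ C : Finset (Fin r), (∀ ⦃i j⦄, G.Adj i j → i ∈ C ∨ j ∈ C) →
      n ≤ ∑ i ∈ C, α i) :
    ∃ M : Multiset (Fin r × Fin r), Multiset.card M = n ∧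
      (∀ p ∈ M, G.Adj p.1 p.2) ∧ ∀ v, edgeDeg M v ≤ α v := by
  classical
  obtain ⟨Xs, Ys, hdisj, hunion, hXY⟩ := hb
  set Xf : Finset (Fin r) := Finset.univ.filter (fun v => v ∈ Xs) with hXf
  have hadj : ∀ ⦃i j⦄, G.Adj i j → (i ∈ Xf ∧ j ∉ Xf) ∨ (i ∉ Xf ∧ j ∈ Xf) := by
    intro i j hij
    rcases hXY hij with ⟨hi, hj⟩ | ⟨hi, hj⟩
    · refine Or.inl ⟨by simp [hXf, hi], ?_⟩
      simp only [hXf, Finset.mem_filter, Finset.mem_univ, true_and]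
      exact fun hjX => Set.disjoint_left.mp hdisj hjX hj
    · refine Or.inr ⟨?_, by simp [hXf, hj]⟩
      simp only [hXf, Finset.mem_filter, Finset.mem_univ, true_and]
      exact fun hiX => Set.disjoint_left.mp hdisj hiX hi
  set cX : Fin r → ℕ := fun i => if i ∈ Xf then α i else 0 with hcX
  set cY : Fin r → ℕ := fun i => if i ∈ Xf then 0 else α i with hcY
  have hcXY : ∀ i, cX i + cY i = α i := fun i => by
    by_cases h : i ∈ Xf <;> simp [hcX, hcY, h]
  set N : ℕ := ∑ i, cX i with hN
  have hNsum : ∑ i ∈ Xf, α i = N := by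
    rw [hN, Finset.sum_ite_mem, Finset.univ_inter]
  have hXfcov : ∀ ⦃i j⦄, G.Adj i j → i ∈ Xf ∨ j ∈ Xf := fun i j hij =>
    (hadj hij).elim (fun h => Or.inl h.1) (fun h => Or.inr h.2)
  have hnN : n ≤ N := hNsum ▸ hcov Xf hXfcov
  let ι := Σ i : Fin r, Fin (cX i)
  let τ := Σ j : Fin r, Fin (cY j)
  let tgt := τ ⊕ Fin (N - n)
  let t : ι → Finset tgt := fun a =>
    Finset.univ.filter (fun b => Sum.elim (fun w : τ => G.Adj a.1 w.1) (fun _ => True) b)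
  have hhall : ∀ s : Finset ι, s.card ≤ (s.biUnion t).card := by
    intro s
    rcases s.eq_empty_or_nonempty with rfl | hs
    · simp
    set T : Finset (Fin r) := s.image Sigma.fst with hT
    have hTX : T ⊆ Xf := by
      intro i hi
      obtain ⟨a, ha, rfl⟩ := Finset.mem_image.mp hi
      by_contra hiX
      have h0 : cX a.1 = 0 := by simp [hcX, hiX]
      have := a.2.2
      omega
    have hcards : s.card ≤ ∑ i ∈ T, α i := by
      have hsub : s ⊆ T.sigma (fun i => (Finset.univ : Finset (Fin (cX i)))) := by
        intro a ha
        rw [Finset.mem_sigma]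
        exact ⟨Finset.mem_image_of_mem _ ha, Finset.mem_univ _⟩
      calc s.card ≤ _ := Finset.card_le_card hsub
        _ = ∑ i ∈ T, cX i := by rw [Finset.card_sigma]; simp
        _ ≤ ∑ i ∈ T, α i := Finset.sum_le_sum fun i _ => by
            by_cases h : i ∈ Xf <;> simp [hcX, h]
    set NT : Finset (Fin r) := Finset.univ.filter (fun j => ∃ i ∈ T, G.Adj i j) with hNT
    have hNTY : ∀ j ∈ NT, j ∉ Xf := by
      intro j hj
      simp only [hNT, Finset.mem_filter, Finset.mem_univ, true_and] at hj
      obtain ⟨i, hiT, hij⟩ := hj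
      rcases hadj hij with ⟨_, hjX⟩ | ⟨hiX, _⟩
      · exact hjX
      · exact absurd (hTX hiT) hiX
    have hcovC : n ≤ ∑ j ∈ NT, α j + ∑ i ∈ Xf \ T, α i := by
      have hCcov : ∀ ⦃i j⦄, G.Adj i j → i ∈ NT ∪ (Xf \ T) ∨ j ∈ NT ∪ (Xf \ T) := by
        intro i j hij
        rcases hadj hij with ⟨hiX, hjX⟩ | ⟨hiX, hjX⟩
        · by_cases hiT : i ∈ T
          · refine Or.inr (Finset.mem_union_left _ ?_)
            simp only [hNT, Finset.mem_filter, Finset.mem_univ, true_and]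
            exact ⟨i, hiT, hij⟩
          · exact Or.inl (Finset.mem_union_right _ (Finset.mem_sdiff.mpr ⟨hiX, hiT⟩))
        · by_cases hjT : j ∈ T
          · refine Or.inl (Finset.mem_union_left _ ?_)
            simp only [hNT, Finset.mem_filter, Finset.mem_univ, true_and]
            exact ⟨j, hjT, hij.symm⟩
          · exact Or.inr (Finset.mem_union_right _ (Finset.mem_sdiff.mpr ⟨hjX, hjT⟩))
      have hdisj2 : Disjoint NT (Xf \ T) := by
        rw [Finset.disjoint_left]
        intro j hj hj2
        exact hNTY j hj (Finset.mem_sdiff.mp hj2).1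
      have h := hcov _ hCcov
      rwa [Finset.sum_union hdisj2] at h
    set B1 : Finset tgt :=
      (NT.sigma (fun j => (Finset.univ : Finset (Fin (cY j))))).image Sum.inl with hB1
    set B2 : Finset tgt := (Finset.univ : Finset (Fin (N - n))).image Sum.inr with hB2
    have hsubB : B1 ∪ B2 ⊆ s.biUnion t := by
      intro b hb
      rcases Finset.mem_union.mp hb with hb | hb
      · obtain ⟨w, hw, rfl⟩ := Finset.mem_image.mp hb
        rw [Finset.mem_sigma] at hw
        have hj := hw.1
        simp only [hNT, Finset.mem_filter, Finset.mem_univ, true_and] at hj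
        obtain ⟨i, hiT, hij⟩ := hj
        obtain ⟨a, ha, rfl⟩ := Finset.mem_image.mp hiT
        refine Finset.mem_biUnion.mpr ⟨a, ha, ?_⟩
        simp only [t, Finset.mem_filter, Finset.mem_univ, true_and, Sum.elim_inl]
        exact hij
      · obtain ⟨x, _, rfl⟩ := Finset.mem_image.mp hb
        obtain ⟨a, ha⟩ := hs
        refine Finset.mem_biUnion.mpr ⟨a, ha, ?_⟩
        simp [t]
    have hdisjB : Disjoint B1 B2 := by
      rw [Finset.disjoint_left]
      rintro b hb1 hb2
      obtain ⟨w, _, rfl⟩ := Finset.mem_image.mp hb1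
      obtain ⟨x, _, hx⟩ := Finset.mem_image.mp hb2
      exact Sum.inr_ne_inl hx
    have hcardB1 : B1.card = ∑ j ∈ NT, α j := by
      rw [hB1, Finset.card_image_of_injective _ Sum.inl_injective, Finset.card_sigma]
      refine Finset.sum_congr rfl fun j hj => ?_
      have := hNTY j hj
      simp [hcY, this]
    have hcardB2 : B2.card = N - n := by
      rw [hB2, Finset.card_image_of_injective _ Sum.inr_injective]
      simp
    calc s.card ≤ ∑ i ∈ T, α i := hcards
      _ ≤ ∑ j ∈ NT, α j + (N - n) := by
          have hsplit : ∑ i ∈ Xf \ T, α i + ∑ i ∈ T, α i = ∑ i ∈ Xf, α i :=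
            Finset.sum_sdiff hTX
          omega
      _ = (B1 ∪ B2).card := by
          rw [Finset.card_union_of_disjoint hdisjB, hcardB1, hcardB2]
      _ ≤ (s.biUnion t).card := Finset.card_le_card hsubB
  obtain ⟨f, hfinj, hft⟩ := (Finset.all_card_le_biUnion_card_iff_exists_injective t).mp hhall
  have hcardι : Fintype.card ι = N := by
    rw [hN]
    simp [ι]
  have hcard_sR : (Finset.univ.filter (fun a : ι => ¬ (f a).isLeft)).card ≤ N - n := by
    have hkey : (Finset.univ.filter (fun a : ι => ¬ (f a).isLeft)).card
        ≤ ((Finset.univ : Finset (Fin (N - n))).image (Sum.inr : Fin (N - n) → tgt)).card := by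
      refine Finset.card_le_card_of_injOn f ?_ (fun a _ b _ h => hfinj h)
      intro a ha
      rw [Finset.mem_coe, Finset.mem_filter] at ha
      obtain ⟨x, hx⟩ := Sum.isRight_iff.mp (Sum.not_isLeft.mp ha.2)
      exact hx ▸ Finset.mem_image_of_mem _ (Finset.mem_univ x)
    calc _ ≤ _ := hkey
      _ = N - n := by rw [Finset.card_image_of_injective _ Sum.inr_injective]; simp
  have hsLcard : n ≤ (Finset.univ.filter (fun a : ι => (f a).isLeft)).card := by
    have hpart := Finset.card_filter_add_card_filter_not
      (s := (Finset.univ : Finset ι)) (p := fun a => (f a).isLeft)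
    rw [Finset.card_univ, hcardι] at hpart
    omega
  obtain ⟨s0, hs0sub, hs0card⟩ := Finset.exists_subset_card_eq hsLcard
  let e : ι → Fin r × Fin r := fun a => (a.1, Sum.elim (fun w : τ => w.1) (fun _ => a.1) (f a))
  have hleft : ∀ a ∈ s0, ∃ w : τ, f a = Sum.inl w := by
    intro a ha
    have := (Finset.mem_filter.mp (hs0sub ha)).2
    exact Sum.isLeft_iff.mp this
  refine ⟨s0.val.map e, by simp [hs0card], ?_, ?_⟩
  · intro p hp
    rw [Multiset.mem_map] at hp
    obtain ⟨a, ha, rfl⟩ := hp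
    rw [Finset.mem_val] at ha
    obtain ⟨w, hw⟩ := hleft a ha
    have hadj' := hft a
    simp only [t, Finset.mem_filter, Finset.mem_univ, true_and, hw, Sum.elim_inl] at hadj'
    simpa [e, hw] using hadj'
  · intro v
    rw [edgeDeg_apply]
    have hsum0 : (Multiset.map (fun p => (if p.1 = v then 1 else 0) + (if p.2 = v then 1 else 0))
        (s0.val.map e)).sum
        = ∑ a ∈ s0, ((if (e a).1 = v then 1 else 0) + (if (e a).2 = v then 1 else 0)) := by
      rw [Multiset.map_map]
      rfl
    rw [hsum0, Finset.sum_add_distrib, ← Finset.card_filter, ← Finset.card_filter]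
    have hb1 : (s0.filter fun a => (e a).1 = v).card ≤ cX v := by
      have hkey : (s0.filter fun a => (e a).1 = v).card ≤ (Finset.range (cX v)).card := by
        refine Finset.card_le_card_of_injOn (fun a => (a.2 : ℕ)) ?_ ?_
        · intro a ha
          rw [Finset.mem_coe, Finset.mem_filter] at ha
          have hv : a.1 = v := ha.2
          rw [Finset.mem_coe, Finset.mem_range, ← hv]
          exact a.2.2
        · intro a ha b hb h
          rw [Finset.coe_filter, Set.mem_setOf_eq] at ha hb
          obtain ⟨i, x⟩ := a
          obtain ⟨j, y⟩ := b
          have hi : i = v := ha.2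
          have hj : j = v := hb.2
          subst hi
          subst hj
          exact congrArg _ (Fin.ext h)
      simpa using hkey
    have hb2 : (s0.filter fun a => (e a).2 = v).card ≤ cY v := by
      have hkey : (s0.filter fun a => (e a).2 = v).card ≤ (Finset.range (cY v)).card := by
        refine Finset.card_le_card_of_injOn
          (fun a => Sum.elim (fun w : τ => (w.2 : ℕ)) (fun _ => 0) (f a)) ?_ ?_
        · intro a ha
          rw [Finset.mem_coe, Finset.mem_filter] at ha
          obtain ⟨w, hw⟩ := hleft a ha.1
          have hv : w.1 = v := by
            have := ha.2
            simpa [e, hw] using this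
          dsimp only
          rw [hw, Sum.elim_inl, Finset.mem_coe, Finset.mem_range, ← hv]
          exact w.2.2
        · intro a ha b hb h
          rw [Finset.coe_filter, Set.mem_setOf_eq] at ha hb
          obtain ⟨w, hw⟩ := hleft a ha.1
          obtain ⟨w', hw'⟩ := hleft b hb.1
          have hva : w.1 = v := by simpa [e, hw] using ha.2
          have hvb : w'.1 = v := by simpa [e, hw'] using hb.2
          simp only [hw, hw', Sum.elim_inl] at h
          have hww : w = w' := by
            obtain ⟨i, x⟩ := w
            obtain ⟨j, y⟩ := w'
            have hi : i = v := hva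
            have hj : j = v := hvb
            subst hi
            subst hj
            exact congrArg _ (Fin.ext h)
          exact hfinj (by rw [hw, hw', hww])
      simpa using hkey
    calc (s0.filter fun a => (e a).1 = v).card + (s0.filter fun a => (e a).2 = v).card
        ≤ cX v + cY v := Nat.add_le_add hb1 hb2
      _ = α v := hcXY v

end AuxEdge

/-- For a bipartite graph `G`, `α ∈ ℕ^r`, `n ≥ 1` and an
independent set `F`: `x^α · (∏_{i∈F} x_i)^k ∉ I(G)^n` for every `k ≥ 0` iff
there is a maximal independent set `H ⊇ F` with `Σ_{i∉H} α_i ≤ n − 1`. -/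

theorem mem_power_edgeIdeal_bipartite_iff (K : Type*) [Field K] {r : ℕ}
    (G : SimpleGraph (Fin r)) (hG : ∀ v, ∃ w, G.Adj v w)
    (hb : IsBipartite G) (α : Fin r → ℕ) (n : ℕ) (hn : 1 ≤ n)
    (F : Finset (Fin r)) (hF : IsIndepSet G F) :
    (∀ k : ℕ,
      (∏ i, (MvPolynomial.X i : MvPolynomial (Fin r) K) ^ α i) *
          (∏ i ∈ F, (MvPolynomial.X i : MvPolynomial (Fin r) K)) ^ k ∉
        edgeIdeal K G ^ n) ↔
    ∃ H : Finset (Fin r), IsMaxIndepSet G H ∧ F ⊆ H ∧ ∑ i ∈ Hᶜ, α i ≤ n - 1 := by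
  classical
  constructor
  · -- forward: contrapositive
    intro hnot
    by_contra hno
    push_neg at hno
    -- every cover of weight function α' has weight ≥ n
    set α' : Fin r → ℕ := fun i => α i + if i ∈ F then n else 0 with hα'
    have hcov : ∀ C : Finset (Fin r), (∀ ⦃i j⦄, G.Adj i j → i ∈ C ∨ j ∈ C) →
        n ≤ ∑ i ∈ C, α' i := by
      intro C hC
      by_cases hFC : ∃ i ∈ F, i ∈ C
      · obtain ⟨i0, hi0F, hi0C⟩ := hFC
        calc n ≤ α' i0 := by simp [α', if_pos hi0F]
          _ ≤ ∑ i ∈ C, α' i := Finset.single_le_sum (fun i _ => Nat.zero_le _) hi0C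
      · push_neg at hFC
        have hFCc : F ⊆ Cᶜ := fun i hi => Finset.mem_compl.mpr (hFC i hi)
        obtain ⟨H, hHmax, hCH⟩ := exists_maxIndep_superset G Cᶜ (indep_of_compl_cover hC)
        have hFH : F ⊆ H := hFCc.trans hCH
        have hHC : Hᶜ ⊆ C := by
          intro i hi
          by_contra hic
          exact (Finset.mem_compl.mp hi) (hCH (Finset.mem_compl.mpr hic))
        have h1 : n ≤ ∑ i ∈ Hᶜ, α i := by
          have := hno H hHmax hFH
          omega
        calc n ≤ ∑ i ∈ Hᶜ, α i := h1
          _ ≤ ∑ i ∈ C, α i := Finset.sum_le_sum_of_subset hHC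
          _ ≤ ∑ i ∈ C, α' i := Finset.sum_le_sum fun i _ => by simp [α']
    obtain ⟨M, hMc, hMe, hMd⟩ := koenig G hb α' n hcov
    refine hnot n ?_
    rw [lhs_eq_monomial]
    rw [monomial_mem_pow_iff]
    refine ⟨M, hMc, hMe, ?_⟩
    rw [Finsupp.le_def]
    intro v
    simpa using hMd v
  · -- backward
    rintro ⟨H, hHmax, hFH, hsum⟩ k hmem
    rw [lhs_eq_monomial, monomial_mem_pow_iff] at hmem
    obtain ⟨M, hMc, hMe, hMd⟩ := hmem
    have hcover := compl_cover_of_indep hHmax.1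
    have h1 : n ≤ ∑ i ∈ Hᶜ, edgeDeg M i := hMc ▸ sum_edgeDeg_cover hMe hcover
    have h2 : ∑ i ∈ Hᶜ, edgeDeg M i ≤ ∑ i ∈ Hᶜ, (α i + if i ∈ F then k else 0) := by
      refine Finset.sum_le_sum fun i _ => ?_
      simpa using (Finsupp.le_def.mp hMd) i
    have h3 : ∑ i ∈ Hᶜ, (α i + if i ∈ F then k else 0) = ∑ i ∈ Hᶜ, α i := by
      refine Finset.sum_congr rfl fun i hi => ?_
      rw [if_neg fun hiF => (Finset.mem_compl.mp hi) (hFH hiF), add_zero]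
    omega
end

section
/- Let G be a connected bipartite finite simple graph with bipartition (X, Y), for each vertex i let μ_G(i) be the number of non-leaf edges of G incident with i, and set n := ε(G) − ε₀(G) + 1. Then Σ_{i∈X} μ_G(i) = Σ_{i∈Y} μ_G(i) = ε(G) − ε₀(G) = n − 1, and every maximal independent set F of G different from X and Y satisfies Σ_{i∉F} μ_G(i) ≥ n. -/
open MvPolynomial

/-- For a connected bipartite graph `G` with bipartition
`(X, Y)`, with `μ_G(i)` the number of non-leaf edges incident with `i` and
`n := ε(G) − ε₀(G) + 1`: `Σ_{i∈X} μ_G(i) = Σ_{i∈Y} μ_G(i) = ε(G) − ε₀(G)`, and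
every maximal independent set `F ∉ {X, Y}` satisfies `Σ_{i∉F} μ_G(i) ≥ n`. -/
theorem mu_sums_bipartition {r : ℕ}
    (G : SimpleGraph (Fin r)) (hG : ∀ v, ∃ w, G.Adj v w)
    (hconn : G.Connected) (X Y : Finset (Fin r)) (hXY : IsBipartitionF G X Y) :
    ∑ i ∈ X, mu G i = eps G - eps0 G ∧
    ∑ i ∈ Y, mu G i = eps G - eps0 G ∧
    ∀ F : Finset (Fin r), IsMaxIndepSet G F → F ≠ X → F ≠ Y →
      eps G - eps0 G + 1 ≤ ∑ i ∈ Fᶜ, mu G i := by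
  classical
  obtain ⟨hdisj, hcover, hadj⟩ := hXY
  haveI : DecidableRel G.Adj := fun a b => Classical.dec _
  set N : Finset (Sym2 (Fin r)) :=
    G.edgeFinset.filter (fun e => e ∉ leafEdgeSet G) with hNdef
  -- basic representation of edges
  have hrep : ∀ e ∈ G.edgeSet, ∃ a b : Fin r, a ≠ b ∧ G.Adj a b ∧ e = s(a, b) := by
    intro e
    induction e using Sym2.ind with
    | _ a b =>
      intro he
      rw [SimpleGraph.mem_edgeSet] at he
      exact ⟨a, b, he.ne, he, rfl⟩
  have hsub : leafEdgeSet G ⊆ G.edgeSet := fun e he => he.1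
  -- eps, eps0 via finsets
  have heps : eps G = G.edgeFinset.card := by
    rw [eps, ← Set.ncard_coe_finset]
    congr 1
    exact (SimpleGraph.coe_edgeFinset G).symm
  have heps0 : eps0 G = (G.edgeFinset.filter (fun e => e ∈ leafEdgeSet G)).card := by
    rw [eps0, ← Set.ncard_coe_finset]
    congr 1
    ext e
    simp only [Finset.coe_filter, Set.mem_setOf_eq, SimpleGraph.mem_edgeFinset]
    exact ⟨fun h => ⟨hsub h, h⟩, fun h => h.2⟩
  have hcardN : eps G - eps0 G = N.card := by
    have := Finset.card_filter_add_card_filter_not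
      (s := G.edgeFinset) (p := fun e => e ∈ leafEdgeSet G)
    rw [heps, heps0, hNdef]
    omega
  -- mu via finsets
  have hmu : ∀ i : Fin r, mu G i = (N.filter (fun e => i ∈ e)).card := by
    intro i
    rw [mu, ← Set.ncard_coe_finset]
    congr 1
    ext e
    simp only [Finset.coe_filter, Set.mem_setOf_eq, Finset.mem_filter,
      SimpleGraph.mem_edgeFinset, hNdef]
    tauto
  -- double counting
  have hswap : ∀ S : Finset (Fin r),
      ∑ i ∈ S, mu G i = ∑ e ∈ N, (S.filter (fun i => i ∈ e)).card := by
    intro S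
    simp only [hmu, Finset.card_filter]
    rw [Finset.sum_comm]
  -- X membership is "exactly one endpoint"
  have hYX : ∀ v : Fin r, v ∈ Y ↔ v ∉ X := by
    intro v
    constructor
    · exact fun hv => Finset.disjoint_right.mp hdisj hv
    · intro hv
      have : v ∈ X ∪ Y := by rw [hcover]; exact Finset.mem_univ v
      rcases Finset.mem_union.mp this with h | h
      · exact absurd h hv
      · exact h
  have hXone : ∀ a b : Fin r, G.Adj a b → (a ∈ X ↔ b ∉ X) := by
    intro a b hab
    rcases hadj hab with ⟨ha, hb⟩ | ⟨ha, hb⟩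
    · simp [ha, (hYX b).mp hb]
    · simp [(hYX a).mp ha, hb]
  -- counting endpoints in a set
  have hfilter_pair : ∀ (S : Finset (Fin r)) (a b : Fin r),
      S.filter (fun i => i ∈ (s(a, b) : Sym2 (Fin r))) = S ∩ {a, b} := by
    intro S a b
    ext i
    simp [Sym2.mem_iff]
  have hcount_one : ∀ (S : Finset (Fin r)) (a b : Fin r), a ≠ b → a ∈ S → b ∉ S →
      (S.filter (fun i => i ∈ (s(a, b) : Sym2 (Fin r)))).card = 1 := by
    intro S a b hne ha hb
    rw [hfilter_pair]
    have : S ∩ {a, b} = {a} := by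
      ext i
      simp only [Finset.mem_inter, Finset.mem_insert, Finset.mem_singleton]
      constructor
      · rintro ⟨hi, rfl | rfl⟩
        · rfl
        · exact absurd hi hb
      · rintro rfl
        exact ⟨ha, Or.inl rfl⟩
    rw [this, Finset.card_singleton]
  -- value of sum over a "side" of the bipartition
  have hside : ∀ S : Finset (Fin r), (∀ v, v ∈ S ↔ v ∈ X) →
      ∑ i ∈ S, mu G i = eps G - eps0 G := by
    intro S hS
    rw [hswap, hcardN]
    rw [Finset.card_eq_sum_ones N]
    apply Finset.sum_congr rfl
    intro e he
    have heE : e ∈ G.edgeSet := by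
      rw [← SimpleGraph.mem_edgeFinset]
      exact (Finset.mem_filter.mp he).1
    obtain ⟨a, b, hne, hab, rfl⟩ := hrep e heE
    by_cases ha : a ∈ X
    · exact hcount_one S a b hne ((hS a).mpr ha) (fun h => (hXone a b hab).mp ha ((hS b).mp h))
    · have hb : b ∈ X := by
        have := (hXone b a hab.symm)
        tauto
      rw [Sym2.eq_swap]
      exact hcount_one S b a hne.symm ((hS b).mpr hb) (fun h => ha ((hS a).mp h))
  have hXsum : ∑ i ∈ X, mu G i = eps G - eps0 G := hside X (fun v => Iff.rfl)
  have hYsum : ∑ i ∈ Y, mu G i = eps G - eps0 G := by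
    -- Y plays the role of X for the swapped bipartition; reuse via symmetry
    rw [hswap, hcardN, Finset.card_eq_sum_ones N]
    apply Finset.sum_congr rfl
    intro e he
    have heE : e ∈ G.edgeSet := by
      rw [← SimpleGraph.mem_edgeFinset]
      exact (Finset.mem_filter.mp he).1
    obtain ⟨a, b, hne, hab, rfl⟩ := hrep e heE
    by_cases ha : a ∈ Y
    · have hbY : b ∉ Y := by
        rw [hYX] at ha ⊢
        have := hXone a b hab
        tauto
      exact hcount_one Y a b hne ha hbY
    · have hbY : b ∈ Y := by
        rw [hYX] at ha ⊢
        have := hXone a b hab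
        tauto
      rw [Sym2.eq_swap]
      exact hcount_one Y b a hne.symm hbY ha
  refine ⟨hXsum, hYsum, ?_⟩
  intro F hF hFX hFY
  obtain ⟨hFind, hFmax⟩ := hF
  -- key: there is a non-leaf edge with both endpoints outside F
  have hleafhelp : ∀ a b : Fin r, G.Adj a b → IsLeaf G b → a ∉ F → b ∈ F := by
    intro a b hab hbleaf haF
    by_contra hbF
    have hnb : G.neighborSet b = {a} := by
      obtain ⟨x, hx⟩ := Set.ncard_eq_one.mp hbleaf
      have haN : a ∈ G.neighborSet b := hab.symm
      rw [hx] at haN ⊢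
      rw [Set.mem_singleton_iff] at haN
      rw [haN]
    have hind : IsIndepSet G (insert b F) := by
      intro i hi j hj hij
      rcases Finset.mem_insert.mp hi with hib | hiF
      · rw [hib] at hij
        rcases Finset.mem_insert.mp hj with hjb | hjF
        · rw [hjb] at hij; exact G.irrefl hij
        · have hjn : j ∈ G.neighborSet b := hij
          rw [hnb, Set.mem_singleton_iff] at hjn
          exact haF (hjn ▸ hjF)
      · rcases Finset.mem_insert.mp hj with hjb | hjF
        · rw [hjb] at hij
          have hin : i ∈ G.neighborSet b := hij.symm
          rw [hnb, Set.mem_singleton_iff] at hin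
          exact haF (hin ▸ hiF)
        · exact hFind i hiF j hjF hij
    have := hFmax (insert b F) hind (Finset.subset_insert b F)
    exact hbF (this ▸ Finset.mem_insert_self b F)
  have hexists : ∃ a b : Fin r, G.Adj a b ∧ (s(a, b) : Sym2 (Fin r)) ∉ leafEdgeSet G ∧
      a ∉ F ∧ b ∉ F := by
    by_contra hcon
    push_neg at hcon
    -- every edge has exactly one endpoint in F
    have hone : ∀ a b : Fin r, G.Adj a b → (a ∈ F ↔ b ∉ F) := by
      intro a b hab
      constructor
      · intro ha hb
        exact hFind a ha b hb hab
      · intro hb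
        by_contra ha
        by_cases hl : (s(a, b) : Sym2 (Fin r)) ∈ leafEdgeSet G
        · obtain ⟨_, v, hv, hvleaf⟩ := hl
          rcases Sym2.mem_iff.mp hv with h | h
          · rw [h] at hvleaf
            exact ha (hleafhelp b a hab.symm hvleaf hb)
          · rw [h] at hvleaf
            exact hb (hleafhelp a b hab hvleaf ha)
        · exact hb (hcon a b hab hl ha)
    -- membership-parity propagates along walks
    have hstep : ∀ a b : Fin r, G.Adj a b → ((a ∈ F ↔ a ∈ X) ↔ (b ∈ F ↔ b ∈ X)) := by
      intro a b hab
      have h1 := hone a b hab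
      have h2 := hXone a b hab
      tauto
    have hwalk : ∀ (u v : Fin r) (w : G.Walk u v), ((u ∈ F ↔ u ∈ X) ↔ (v ∈ F ↔ v ∈ X)) := by
      intro u v w
      induction w with
      | nil => exact Iff.rfl
      | cons h _ ih => exact (hstep _ _ h).trans ih
    obtain ⟨u₀⟩ := hconn.nonempty
    have hall : ∀ v : Fin r, ((u₀ ∈ F ↔ u₀ ∈ X) ↔ (v ∈ F ↔ v ∈ X)) := by
      intro v
      exact (hconn.preconnected u₀ v).elim (fun w => hwalk u₀ v w)
    by_cases h0 : u₀ ∈ F ↔ u₀ ∈ X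
    · apply hFX
      ext v
      exact (hall v).mp h0
    · apply hFY
      ext v
      have := (hall v)
      have hvy := (hYX v)
      tauto
  obtain ⟨a₀, b₀, hab₀, hnl₀, haF₀, hbF₀⟩ := hexists
  have he₀N : (s(a₀, b₀) : Sym2 (Fin r)) ∈ N := by
    rw [hNdef, Finset.mem_filter]
    exact ⟨SimpleGraph.mem_edgeFinset.mpr hab₀, hnl₀⟩
  -- every non-leaf edge contributes ≥ 1 to Fᶜ, and e₀ contributes ≥ 2
  have hbound : ∀ e ∈ N, 1 ≤ ((Fᶜ : Finset (Fin r)).filter (fun i => i ∈ e)).card := by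
    intro e he
    have heE : e ∈ G.edgeSet := by
      rw [← SimpleGraph.mem_edgeFinset]
      exact (Finset.mem_filter.mp he).1
    obtain ⟨a, b, hne, hab, rfl⟩ := hrep e heE
    rw [Finset.one_le_card]
    by_cases ha : a ∈ F
    · refine ⟨b, Finset.mem_filter.mpr ⟨Finset.mem_compl.mpr ?_, ?_⟩⟩
      · intro hb
        exact hFind a ha b hb hab
      · simp [Sym2.mem_iff]
    · exact ⟨a, Finset.mem_filter.mpr ⟨Finset.mem_compl.mpr ha, by simp [Sym2.mem_iff]⟩⟩
  have hbound₀ : 2 ≤ ((Fᶜ : Finset (Fin r)).filter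
      (fun i => i ∈ (s(a₀, b₀) : Sym2 (Fin r)))).card := by
    have hsub2 : ({a₀, b₀} : Finset (Fin r)) ⊆
        (Fᶜ : Finset (Fin r)).filter (fun i => i ∈ (s(a₀, b₀) : Sym2 (Fin r))) := by
      intro i hi
      rcases Finset.mem_insert.mp hi with rfl | hi
      · exact Finset.mem_filter.mpr ⟨Finset.mem_compl.mpr haF₀, by simp [Sym2.mem_iff]⟩
      · rw [Finset.mem_singleton] at hi
        subst hi
        exact Finset.mem_filter.mpr ⟨Finset.mem_compl.mpr hbF₀, by simp [Sym2.mem_iff]⟩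
    calc 2 = ({a₀, b₀} : Finset (Fin r)).card := (Finset.card_pair hab₀.ne).symm
      _ ≤ _ := Finset.card_le_card hsub2
  rw [hswap, hcardN]
  have hlt : N.card < ∑ e ∈ N, ((Fᶜ : Finset (Fin r)).filter (fun i => i ∈ e)).card := by
    rw [Finset.card_eq_sum_ones N]
    apply Finset.sum_lt_sum hbound
    exact ⟨_, he₀N, by omega⟩
  omega
end

section
/- Let G be a bipartite finite simple graph without isolated vertices with r vertices, let p be a leaf of G and q the unique neighbor of p. Given α = (α_1,…,α_r) ∈ ℕ^r, define β ∈ ℕ^r by β_i = α_i + 1 if i = p or i = q, and β_i = α_i otherwise. Then for every maximal independent set F of G, Σ_{i∉F} β_i = Σ_{i∉F} α_i + 1; consequently, for every n ≥ 1, a maximal independent set F satisfies Σ_{i∉F} α_i ≤ n − 1 if and only if it satisfies Σ_{i∉F} β_i ≤ n. -/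
open MvPolynomial

/-- Let `p` be a leaf of a bipartite graph `G` with unique
neighbor `q`, and let `β` be obtained from `α` by adding `1` at `p` and `q`.
Then `Σ_{i∉F} β_i = Σ_{i∉F} α_i + 1` for every maximal independent set `F`;
consequently, for `n ≥ 1`, `Σ_{i∉F} α_i ≤ n − 1 ↔ Σ_{i∉F} β_i ≤ n`. -/
theorem leaf_shift_maximal_indep {r : ℕ}
    (G : SimpleGraph (Fin r)) (hG : ∀ v, ∃ w, G.Adj v w) (hb : IsBipartite G)
    (p q : Fin r) (hpq : G.neighborSet p = {q})
    (α β : Fin r → ℕ) (hβ : ∀ i, β i = if i = p ∨ i = q then α i + 1 else α i) :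
    (∀ F : Finset (Fin r), IsMaxIndepSet G F →
      ∑ i ∈ Fᶜ, β i = ∑ i ∈ Fᶜ, α i + 1) ∧
    ∀ n : ℕ, 1 ≤ n → ∀ F : Finset (Fin r), IsMaxIndepSet G F →
      (∑ i ∈ Fᶜ, α i ≤ n - 1 ↔ ∑ i ∈ Fᶜ, β i ≤ n) := by
  classical
  have hadj : G.Adj p q := by
    have : q ∈ G.neighborSet p := by rw [hpq]; rfl
    exact this
  have hne : p ≠ q := hadj.ne
  have key : ∀ F : Finset (Fin r), IsMaxIndepSet G F →
      ∑ i ∈ Fᶜ, β i = ∑ i ∈ Fᶜ, α i + 1 := by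
    intro F hF
    have hnotboth : ¬ (p ∈ F ∧ q ∈ F) := fun ⟨hp, hq⟩ => hF.1 p hp q hq hadj
    have hone : p ∈ F ∨ q ∈ F := by
      by_contra h
      push_neg at h
      obtain ⟨hp, hq⟩ := h
      have hind : IsIndepSet G (insert p F) := by
        intro i hi j hj hij
        rcases Finset.mem_insert.mp hi with hip | hiF
        · rcases Finset.mem_insert.mp hj with hjp | hjF
          · exact G.loopless.irrefl _ (hip ▸ hjp ▸ hij)
          · have h2 : j ∈ G.neighborSet p := hip ▸ hij
            rw [hpq] at h2
            have : j = q := h2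
            exact hq (this ▸ hjF)
        · rcases Finset.mem_insert.mp hj with hjp | hjF
          · have h2 : i ∈ G.neighborSet p := hjp ▸ hij.symm
            rw [hpq] at h2
            have : i = q := h2
            exact hq (this ▸ hiF)
          · exact hF.1 i hiF j hjF hij
      have := hF.2 _ hind (Finset.subset_insert p F)
      exact hp (this ▸ Finset.mem_insert_self p F)
    have hsplit : ∀ i, β i = α i + (if i = p ∨ i = q then 1 else 0) := by
      intro i; rw [hβ]; split <;> simp
    rw [Finset.sum_congr rfl (fun i _ => hsplit i), Finset.sum_add_distrib]
    congr 1
    rw [← Finset.sum_filter]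
    rcases hone with hp | hq
    · have hq : q ∉ F := fun hq => hnotboth ⟨hp, hq⟩
      have : Fᶜ.filter (fun i => i = p ∨ i = q) = {q} := by
        ext i
        simp only [Finset.mem_filter, Finset.mem_compl, Finset.mem_singleton]
        constructor
        · rintro ⟨hi, rfl | rfl⟩
          · exact absurd hp hi
          · rfl
        · rintro rfl; exact ⟨hq, Or.inr rfl⟩
      simp [this]
    · have hp : p ∉ F := fun hp => hnotboth ⟨hp, hq⟩
      have : Fᶜ.filter (fun i => i = p ∨ i = q) = {p} := by
        ext i
        simp only [Finset.mem_filter, Finset.mem_compl, Finset.mem_singleton]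
        constructor
        · rintro ⟨hi, rfl | rfl⟩
          · rfl
          · exact absurd hq hi
        · rintro rfl; exact ⟨hp, Or.inl rfl⟩
      simp [this]
  refine ⟨key, fun n hn F hF => ?_⟩
  rw [key F hF]
  omega
end
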